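/- Fix L ≥ 2 and define f(x) = Lx - (L-1)/(L+1) - (1/(L+1))·(L-1)/(L - (L+1)x) for 0 < x ≤ 1/(L+1). Then f is increasing on this interval and f(x) ≤ f(1/(L+1)) = 0; consequently, for 0 < θ ≤ 1/(L+1), L·θ ≤ ((1-θ)/θ)·(1 - (1-2θ)/(1 - (1 + 1/L)θ)). -/

import Mathlib

theorem stmt_14 (L : ℕ) (hL : 2 ≤ L) (f : ℝ → ℝ)
    (hf : ∀ x : ℝ, f x = (L : ℝ) * x - ((L : ℝ) - 1) / ((L : ℝ) + 1) -
      (1 / ((L : ℝ) + 1)) * (((L : ℝ) - 1) / ((L : ℝ) - ((L : ℝ) + 1) * x))) :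
    (∀ x y : ℝ, 0 < x → x < y → y ≤ 1 / ((L : ℝ) + 1) → f x < f y) ∧
    (∀ x : ℝ, 0 < x → x ≤ 1 / ((L : ℝ) + 1) → f x ≤ f (1 / ((L : ℝ) + 1))) ∧
    f (1 / ((L : ℝ) + 1)) = 0 ∧
    (∀ θ : ℝ, 0 < θ → θ ≤ 1 / ((L : ℝ) + 1) →
      (L : ℝ) * θ ≤ ((1 - θ) / θ) * (1 - (1 - 2 * θ) / (1 - (1 + 1 / (L : ℝ)) * θ))) := by
  have hL2 : (2:ℝ) ≤ (L:ℝ) := by exact_mod_cast hL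
  have hc : (0:ℝ) < (L:ℝ) + 1 := by linarith
  have hmono : ∀ x y : ℝ, 0 < x → x < y → y ≤ 1 / ((L : ℝ) + 1) → f x < f y := by
    intro x y hx hxy hy
    have hdy : (1:ℝ) ≤ (L:ℝ) - ((L:ℝ)+1)*y := by
      have : ((L:ℝ)+1)*y ≤ 1 := by
        calc ((L:ℝ)+1)*y ≤ ((L:ℝ)+1)*(1/((L:ℝ)+1)) := by nlinarith
        _ = 1 := by field_simp
      linarith
    have hdx : (L:ℝ) - ((L:ℝ)+1)*y < (L:ℝ) - ((L:ℝ)+1)*x := by nlinarith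
    have hdx0 : (0:ℝ) < (L:ℝ) - ((L:ℝ)+1)*x := by linarith
    have hdy0 : (0:ℝ) < (L:ℝ) - ((L:ℝ)+1)*y := by linarith
    rw [hf, hf, ← sub_pos]
    have h1 : 0 < y - x := by linarith
    have hdxne : (L:ℝ) - ((L:ℝ)+1)*x ≠ 0 := ne_of_gt hdx0
    have hdyne : (L:ℝ) - ((L:ℝ)+1)*y ≠ 0 := ne_of_gt hdy0
    have hdxne' : (L:ℝ) - x*((L:ℝ)+1) ≠ 0 := by linarith
    have hdyne' : (L:ℝ) - y*((L:ℝ)+1) ≠ 0 := by linarith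
    have hab : (1:ℝ) ≤ ((L:ℝ) - ((L:ℝ)+1)*x)*((L:ℝ) - ((L:ℝ)+1)*y) := by nlinarith
    have hkey : 0 < (y-x)*((L:ℝ)*(((L:ℝ) - ((L:ℝ)+1)*x)*((L:ℝ) - ((L:ℝ)+1)*y)) - ((L:ℝ)-1)) :=
      mul_pos h1 (by nlinarith)
    have heq : (L:ℝ) * y - ((L:ℝ) - 1) / ((L:ℝ) + 1) -
        (1 / ((L:ℝ) + 1)) * (((L:ℝ) - 1) / ((L:ℝ) - ((L:ℝ) + 1) * y)) -
        ((L:ℝ) * x - ((L:ℝ) - 1) / ((L:ℝ) + 1) -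
        (1 / ((L:ℝ) + 1)) * (((L:ℝ) - 1) / ((L:ℝ) - ((L:ℝ) + 1) * x)))
        = (y-x)*((L:ℝ)*(((L:ℝ) - ((L:ℝ)+1)*x)*((L:ℝ) - ((L:ℝ)+1)*y)) - ((L:ℝ)-1)) /
          (((L:ℝ) - ((L:ℝ)+1)*x)*((L:ℝ) - ((L:ℝ)+1)*y)) := by
      field_simp
      ring
    rw [heq]
    exact div_pos hkey (mul_pos hdx0 hdy0)
  have hend : f (1 / ((L : ℝ) + 1)) = 0 := by
    rw [hf]
    have h1 : (L:ℝ) - ((L:ℝ)+1)*(1/((L:ℝ)+1)) = (L:ℝ) - 1 := by field_simp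
    rw [h1]
    have hL1 : (L:ℝ) - 1 ≠ 0 := by linarith
    field_simp
    ring
  refine ⟨hmono, ?_, hend, ?_⟩
  · intro x hx hxe
    rcases eq_or_lt_of_le hxe with h | h
    · rw [h]
    · exact le_of_lt (hmono x _ hx h le_rfl)
  · intro θ hθ hθe
    have hcb : ((L:ℝ)+1)*θ ≤ 1 := by
      calc ((L:ℝ)+1)*θ ≤ ((L:ℝ)+1)*(1/((L:ℝ)+1)) := by nlinarith
      _ = 1 := by field_simp
    have hd : (1:ℝ) ≤ (L:ℝ) - ((L:ℝ)+1)*θ := by linarith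
    have hL0 : (0:ℝ) < (L:ℝ) := by linarith
    have key : (L:ℝ)*θ*((L:ℝ) - ((L:ℝ)+1)*θ) ≤ ((L:ℝ)-1)*(1-θ) := by
      nlinarith [sq_nonneg (((L:ℝ)+1)*θ - 1), sq_nonneg θ]
    have hrhs : ((1 - θ) / θ) * (1 - (1 - 2 * θ) / (1 - (1 + 1 / (L : ℝ)) * θ))
        = (1-θ)*((L:ℝ)-1)/((L:ℝ) - ((L:ℝ)+1)*θ) := by
      have h0 : (1 - (1 + 1 / (L : ℝ)) * θ) = ((L:ℝ) - ((L:ℝ)+1)*θ)/(L:ℝ) := by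
        field_simp
      rw [h0]
      have hne : (L:ℝ) - ((L:ℝ)+1)*θ ≠ 0 := by linarith
      have hne' : (L:ℝ) - θ*((L:ℝ)+1) ≠ 0 := by linarith
      field_simp
      ring
    rw [hrhs, le_div_iff₀ (by linarith)]
    nlinarith
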